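/- arXiv:2106.08196 — 2 statements merged into one kernel-verified Lean document; each statement's English description precedes it below -/
import Mathlib

section
/- Let x = (x_n) and y = (y_n) be bounded sequences in ℓ¹ such that d_y ≪₀ d_x, i.e., d_y(A) = 0 for every A ⊆ ℕ with d_x(A) = 0. If x is nonatomic, then y is nonatomic. -/
open Filter Set

noncomputable def dsub (x : ℕ → lp (fun _ : ℕ => ℝ) 1) (A : Set ℕ) : ℝ :=
  Filter.limsup (fun n => ∑' j : A, |x n j|) Filter.atTop

def IsBddSeq (x : ℕ → lp (fun _ : ℕ => ℝ) 1) : Prop := ∃ C : ℝ, ∀ n, ‖x n‖ ≤ C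

/-- `x` is nonatomic: for every `ε > 0` there is a finite partition of `ℕ`
all of whose pieces have `dsub x`-value at most `ε`. -/
def Nonatomic (x : ℕ → lp (fun _ : ℕ => ℝ) 1) : Prop :=
  ∀ ε : ℝ, 0 < ε → ∃ (m : ℕ) (A : Fin m → Set ℕ),
    (⋃ i, A i) = Set.univ ∧ Pairwise (Function.onFun Disjoint A) ∧
    ∀ i, dsub x (A i) ≤ ε

noncomputable def mass (x : ℕ → lp (fun _ : ℕ => ℝ) 1) (A : Set ℕ) (n : ℕ) : ℝ :=
  ∑' j : A, |x n j|

lemma summable_abs_lp (f : lp (fun _ : ℕ => ℝ) 1) : Summable fun j => |f j| := by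
  have h := (lp.memℓp f).summable (by norm_num)
  simpa using h

lemma dsub_eq (x : ℕ → lp (fun _ : ℕ => ℝ) 1) (A : Set ℕ) :
    dsub x A = limsup (mass x A) atTop := rfl

lemma mass_nonneg (x : ℕ → lp (fun _ : ℕ => ℝ) 1) (A : Set ℕ) (n : ℕ) :
    0 ≤ mass x A n := tsum_nonneg (fun _ => abs_nonneg _)

lemma mass_mono (x : ℕ → lp (fun _ : ℕ => ℝ) 1) {A B : Set ℕ} (h : A ⊆ B) (n : ℕ) :
    mass x A n ≤ mass x B n := by
  refine Summable.tsum_le_tsum_of_inj (Set.inclusion h) (Set.inclusion_injective h)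
    (fun c _ => abs_nonneg _) (fun i => le_refl _) ?_ ?_
  · exact (summable_abs_lp (x n)).subtype _
  · exact (summable_abs_lp (x n)).subtype _

lemma mass_le_norm (x : ℕ → lp (fun _ : ℕ => ℝ) 1) (A : Set ℕ) (n : ℕ) :
    mass x A n ≤ ‖x n‖ := by
  have hn : ‖x n‖ = ∑' j, |x n j| := by
    have := lp.norm_eq_tsum_rpow (by norm_num : 0 < (1 : ENNReal).toReal) (x n)
    simpa using this
  rw [hn]
  exact Summable.tsum_le_tsum_of_inj (Subtype.val) Subtype.val_injective
    (fun c _ => abs_nonneg _) (fun i => le_refl _)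
    ((summable_abs_lp (x n)).subtype _) (summable_abs_lp (x n))

lemma mass_bdd {x : ℕ → lp (fun _ : ℕ => ℝ) 1} (hx : IsBddSeq x) (A : Set ℕ) :
    IsBoundedUnder (· ≤ ·) atTop (mass x A) := by
  obtain ⟨C, hC⟩ := hx
  exact isBoundedUnder_of ⟨C, fun n => (mass_le_norm x A n).trans (hC n)⟩

lemma mass_cobdd (x : ℕ → lp (fun _ : ℕ => ℝ) 1) (A : Set ℕ) :
    IsCoboundedUnder (· ≤ ·) atTop (mass x A) :=
  IsBoundedUnder.isCoboundedUnder_le (isBoundedUnder_of ⟨0, fun n => mass_nonneg x A n⟩)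

lemma dsub_nonneg {x : ℕ → lp (fun _ : ℕ => ℝ) 1} (hx : IsBddSeq x) (A : Set ℕ) :
    0 ≤ dsub x A :=
  le_limsup_of_frequently_le (Frequently.of_forall fun n => mass_nonneg x A n) (mass_bdd hx A)

lemma dsub_mono {x : ℕ → lp (fun _ : ℕ => ℝ) 1} (hx : IsBddSeq x) {A B : Set ℕ} (h : A ⊆ B) :
    dsub x A ≤ dsub x B :=
  limsup_le_limsup (Eventually.of_forall fun n => mass_mono x h n) (mass_cobdd x A) (mass_bdd hx B)

lemma tendsto_mass_of_dsub_zero {x : ℕ → lp (fun _ : ℕ => ℝ) 1} (hx : IsBddSeq x) {A : Set ℕ}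
    (h : dsub x A = 0) : Tendsto (mass x A) atTop (nhds 0) := by
  rw [tendsto_order]
  constructor
  · intro a ha
    exact Eventually.of_forall fun n => lt_of_lt_of_le ha (mass_nonneg x A n)
  · intro a ha
    have : limsup (mass x A) atTop < a := by rw [← dsub_eq, h]; exact ha
    exact eventually_lt_of_limsup_lt this (mass_bdd hx A)

lemma mass_eq_indicator (x : ℕ → lp (fun _ : ℕ => ℝ) 1) (A : Set ℕ) (n : ℕ) :
    mass x A n = ∑' j, A.indicator (fun j => |x n j|) j := by
  unfold mass; exact tsum_subtype A (fun j => |x n j|)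

lemma mass_union_le (x : ℕ → lp (fun _ : ℕ => ℝ) 1) (A B : Set ℕ) (n : ℕ) :
    mass x (A ∪ B) n ≤ mass x A n + mass x B n := by
  have hs := summable_abs_lp (x n)
  rw [mass_eq_indicator, mass_eq_indicator, mass_eq_indicator, ← Summable.tsum_add (hs.indicator A) (hs.indicator B)]
  refine Summable.tsum_le_tsum (fun j => ?_) (hs.indicator _) ((hs.indicator A).add (hs.indicator B))
  classical
  by_cases hA : j ∈ A <;> by_cases hB : j ∈ B <;>
    simp [Set.indicator_apply, hA, hB, abs_nonneg, add_nonneg]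
-- appended to t3b
lemma dsub_singleton_zero {x : ℕ → lp (fun _ : ℕ => ℝ) 1} (hx : IsBddSeq x)
    (hnx : Nonatomic x) (j : ℕ) : dsub x {j} = 0 := by
  have hle : ∀ ε : ℝ, 0 < ε → dsub x {j} ≤ ε := by
    intro ε hε
    obtain ⟨m, A, hU, _, hA⟩ := hnx ε hε
    have : j ∈ ⋃ i, A i := by rw [hU]; trivial
    obtain ⟨i, hi⟩ := mem_iUnion.1 this
    exact le_trans (dsub_mono hx (singleton_subset_iff.2 hi)) (hA i)
  have h0 := dsub_nonneg hx ({j} : Set ℕ)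
  by_contra hne
  have hpos : 0 < dsub x {j} := lt_of_le_of_ne h0 (Ne.symm hne)
  linarith [hle (dsub x {j} / 2) (by linarith)]

lemma tendsto_abs_apply_zero {x : ℕ → lp (fun _ : ℕ => ℝ) 1} (hx : IsBddSeq x)
    (h : ∀ j : ℕ, dsub x {j} = 0) (j : ℕ) :
    Tendsto (fun n => |x n j|) atTop (nhds 0) := by
  have := tendsto_mass_of_dsub_zero hx (h j)
  have heq : ∀ n, mass x {j} n = |x n j| := by
    intro n; unfold mass; exact tsum_singleton j (fun j => |x n j|)
  exact this.congr heq

lemma tendsto_mass_range_zero {x : ℕ → lp (fun _ : ℕ => ℝ) 1} (hx : IsBddSeq x)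
    (h : ∀ j : ℕ, dsub x {j} = 0) (M : ℕ) :
    Tendsto (mass x ↑(Finset.range M)) atTop (nhds 0) := by
  have heq : ∀ n, mass x ↑(Finset.range M) n = ∑ j ∈ Finset.range M, |x n j| := by
    intro n
    unfold mass
    exact Finset.tsum_subtype' (Finset.range M) (fun j => |x n j|)
  have : Tendsto (fun n => ∑ j ∈ Finset.range M, |x n j|) atTop (nhds 0) := by
    have := tendsto_finset_sum (Finset.range M)
      (fun j _ => tendsto_abs_apply_zero hx h j)
    simpa using this
  exact this.congr (fun n => (heq n).symm)

/-- gluing partitions -/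
lemma good_glue (y : ℕ → lp (fun _ : ℕ => ℝ) 1) (ε : ℝ) {B : Set ℕ} {m : ℕ}
    {C : Fin m → Set ℕ} (hU : (⋃ i, C i) = B) (hD : Pairwise (Function.onFun Disjoint C))
    (hG : ∀ i, ∃ (k : ℕ) (D : Fin k → Set ℕ), (⋃ t, D t) = C i ∧
      Pairwise (Function.onFun Disjoint D) ∧ ∀ t, dsub y (D t) ≤ ε) :
    ∃ (N : ℕ) (E : Fin N → Set ℕ), (⋃ t, E t) = B ∧
      Pairwise (Function.onFun Disjoint E) ∧ ∀ t, dsub y (E t) ≤ ε := by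
  classical
  choose k D hDU hDP hDle using hG
  let g : (Σ i : Fin m, Fin (k i)) → Set ℕ := fun s => D s.1 s.2
  have hgP : Pairwise (Function.onFun Disjoint g) := by
    rintro ⟨i, j⟩ ⟨i', j'⟩ hne
    by_cases hii : i = i'
    · subst hii
      have hjj : j ≠ j' := by
        intro hc; exact hne (by rw [hc])
      exact hDP i hjj
    · have hsub : g ⟨i, j⟩ ⊆ C i := by
        rw [← hDU i]; exact subset_iUnion (fun t => D i t) j
      have hsub' : g ⟨i', j'⟩ ⊆ C i' := by
        rw [← hDU i']; exact subset_iUnion (fun t => D i' t) j'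
      exact ((hD hii).mono hsub hsub')
  let e := Fintype.equivFin (Σ i : Fin m, Fin (k i))
  refine ⟨Fintype.card (Σ i : Fin m, Fin (k i)), g ∘ e.symm, ?_, ?_, ?_⟩
  · rw [show (⋃ t, (g ∘ e.symm) t) = ⋃ s, g s from e.symm.surjective.iUnion_comp g]
    rw [Set.iUnion_sigma]
    rw [← hU]
    exact iUnion_congr hDU
  · exact hgP.comp_of_injective e.symm.injective
  · intro t; exact hDle _ _
lemma mass_range_eq (x : ℕ → lp (fun _ : ℕ => ℝ) 1) (M n : ℕ) :
    mass x ↑(Finset.range M) n = ∑ j ∈ Finset.range M, |x n j| := by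
  unfold mass
  exact Finset.tsum_subtype' (Finset.range M) (fun j => |x n j|)

lemma exists_next {y : ℕ → lp (fun _ : ℕ => ℝ) 1} (hy : IsBddSeq y)
    (hsing : ∀ j : ℕ, dsub y {j} = 0) {ε : ℝ} (hε : 0 < ε)
    {B' : Set ℕ} (hB : ε < dsub y B') (n0 b0 : ℕ) :
    ∃ c : ℕ × ℕ, n0 < c.1 ∧ b0 < c.2 ∧ ε/2 ≤ mass y (B' ∩ Set.Ico b0 c.2) c.1 := by
  classical
  have freq : ∃ᶠ n in atTop, ε < mass y B' n :=
    frequently_lt_of_lt_limsup (mass_cobdd y B') (by rw [← dsub_eq]; exact hB)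
  have ev1 : ∀ᶠ n in atTop, mass y ↑(Finset.range b0) n < ε/4 :=
    (tendsto_mass_range_zero hy hsing b0).eventually (gt_mem_nhds (by linarith))
  obtain ⟨n', h1, h2, h3⟩ := (freq.and_eventually (ev1.and (eventually_gt_atTop n0))).exists
  set f : ℕ → ℝ := fun j => |y n' j| with hf
  have hsummable : Summable f := summable_abs_lp (y n')
  have hsumB : HasSum (B'.indicator f) (mass y B' n') := by
    rw [mass_eq_indicator]
    exact (hsummable.indicator B').hasSum
  have htend := hsumB.tendsto_sum_nat
  have hev3 : ∀ᶠ M in atTop, 3*ε/4 < ∑ j ∈ Finset.range M, B'.indicator f j :=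
    htend.eventually (lt_mem_nhds (by linarith))
  obtain ⟨M, hM1, hM2⟩ := (hev3.and (eventually_gt_atTop b0)).exists
  refine ⟨(n', M), h3, hM2, ?_⟩
  set S : Set ℕ := B' ∩ Set.Ico b0 M with hS
  -- pointwise estimate
  have hpt : ∀ j ∈ Finset.range M,
      B'.indicator f j ≤ S.indicator f j + (if j ∈ Finset.range b0 then f j else 0) := by
    intro j hj
    have hjM : j < M := Finset.mem_range.1 hj
    by_cases hjB : j ∈ B'
    · by_cases hjb : j < b0
      · have : (if j ∈ Finset.range b0 then f j else 0) = f j := if_pos (Finset.mem_range.2 hjb)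
        rw [this, Set.indicator_of_mem hjB]
        have : 0 ≤ S.indicator f j := Set.indicator_nonneg (fun _ _ => abs_nonneg _) j
        linarith
      · have hjS : j ∈ S := ⟨hjB, ⟨not_lt.1 hjb, hjM⟩⟩
        rw [Set.indicator_of_mem hjB, Set.indicator_of_mem hjS]
        have : 0 ≤ (if j ∈ Finset.range b0 then f j else 0) := by
          split <;> simp [hf, abs_nonneg]
        linarith
    · rw [Set.indicator_of_notMem hjB]
      have h1 : 0 ≤ S.indicator f j := Set.indicator_nonneg (fun _ _ => abs_nonneg _) j
      have h2 : 0 ≤ (if j ∈ Finset.range b0 then f j else 0) := by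
        split <;> simp [hf, abs_nonneg]
      linarith
  have hsum1 : ∑ j ∈ Finset.range M, B'.indicator f j ≤
      (∑ j ∈ Finset.range M, S.indicator f j) + ∑ j ∈ Finset.range b0, f j := by
    have := Finset.sum_le_sum hpt
    rw [Finset.sum_add_distrib] at this
    refine this.trans (add_le_add_right (le_of_eq ?_) _)
    rw [Finset.sum_ite_mem]
    congr 1
    rw [Finset.inter_comm]
    exact Finset.inter_eq_left.2 (Finset.range_subset_range.2 hM2.le)
  have hsum2 : ∑ j ∈ Finset.range M, S.indicator f j ≤ mass y S n' := by
    rw [mass_eq_indicator]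
    exact Summable.sum_le_tsum _ (fun j _ => Set.indicator_nonneg (fun _ _ => abs_nonneg _) j)
      (hsummable.indicator S)
  have hsum3 : ∑ j ∈ Finset.range b0, f j < ε/4 := by
    rw [← mass_range_eq]; exact h2
  linarith
theorem stmt_9 (x y : ℕ → lp (fun _ : ℕ => ℝ) 1)
    (hx : IsBddSeq x) (hy : IsBddSeq y)
    (hac : ∀ A : Set ℕ, dsub x A = 0 → dsub y A = 0)
    (hnx : Nonatomic x) :
    Nonatomic y := by
  classical
  by_contra hny
  rw [Nonatomic] at hny
  push_neg at hny
  obtain ⟨ε, hε, hbad⟩ := hny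
  -- `Bad B` : every finite partition of `B` has a piece with `dsub y > ε`
  set Bad : Set ℕ → Prop := fun B => ∀ (m : ℕ) (C : Fin m → Set ℕ), (⋃ i, C i) = B →
    Pairwise (Function.onFun Disjoint C) → ∃ i, ε < dsub y (C i) with hBadDef
  have bad_univ : Bad Set.univ := fun m C h1 h2 => hbad m C h1 h2
  have bad_lt : ∀ {B : Set ℕ}, Bad B → ε < dsub y B := by
    intro B hB
    obtain ⟨i, hi⟩ := hB 1 (fun _ => B) (Set.iUnion_const B) (Subsingleton.pairwise)
    exact hi
  have bad_piece : ∀ {B : Set ℕ} {m : ℕ} {C : Fin m → Set ℕ}, Bad B → (⋃ i, C i) = B →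
      Pairwise (Function.onFun Disjoint C) → ∃ i, Bad (C i) := by
    intro B m C hB hU hP
    by_contra hcon
    push_neg at hcon
    have hG : ∀ i, ∃ (k : ℕ) (D : Fin k → Set ℕ), (⋃ t, D t) = C i ∧
        Pairwise (Function.onFun Disjoint D) ∧ ∀ t, dsub y (D t) ≤ ε := by
      intro i
      have h2 : ¬ ∀ (k : ℕ) (D : Fin k → Set ℕ), (⋃ t, D t) = C i →
          Pairwise (Function.onFun Disjoint D) → ∃ t, ε < dsub y (D t) := hcon i
      push_neg at h2
      obtain ⟨k, D, h1, h2, h3⟩ := h2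
      exact ⟨k, D, h1, h2, fun t => h3 t⟩
    obtain ⟨N, E, hEU, hEP, hEle⟩ := good_glue y ε hU hP hG
    obtain ⟨t, ht⟩ := hB N E hEU hEP
    exact absurd (hEle t) (not_le.2 ht)
  -- refinement step
  have step : ∀ (B : Set ℕ), Bad B → ∀ (δ : ℝ), 0 < δ →
      ∃ B', B' ⊆ B ∧ Bad B' ∧ dsub x B' ≤ δ := by
    intro B hB δ hδ
    obtain ⟨m, A, hU, hP, hle⟩ := hnx δ hδ
    have hU' : (⋃ i, B ∩ A i) = B := by
      rw [← Set.inter_iUnion, hU, Set.inter_univ]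
    have hP' : Pairwise (Function.onFun Disjoint (fun i => B ∩ A i)) :=
      fun i i' h => ((hP h).mono Set.inter_subset_right Set.inter_subset_right)
    obtain ⟨i, hi⟩ := bad_piece hB hU' hP'
    exact ⟨B ∩ A i, Set.inter_subset_left, hi,
      le_trans (dsub_mono hx Set.inter_subset_right) (hle i)⟩
  have hhalf : ∀ k : ℕ, (0:ℝ) < (1/2)^(k+1) := fun k => by positivity
  -- decreasing chain of bad sets with small dsub x
  let F : ℕ → {S : Set ℕ // Bad S} := fun k => Nat.rec ⟨Set.univ, bad_univ⟩
    (fun k p => ⟨(step p.1 p.2 _ (hhalf k)).choose,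
      (step p.1 p.2 _ (hhalf k)).choose_spec.2.1⟩) k
  set B : ℕ → Set ℕ := fun k => (F k).1 with hBdef
  have hBbad : ∀ k, Bad (B k) := fun k => (F k).2
  have hstep : ∀ k, B (k+1) ⊆ B k ∧ dsub x (B (k+1)) ≤ (1/2)^(k+1) := by
    intro k
    have h := (step (F k).1 (F k).2 _ (hhalf k)).choose_spec
    exact ⟨h.1, h.2.2⟩
  have hBanti : Antitone B := antitone_nat_of_succ_le (fun k => (hstep k).1)
  -- singletons
  have hsing : ∀ j : ℕ, dsub y {j} = 0 := fun j => hac _ (dsub_singleton_zero hx hnx j)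
  -- indices and blocks
  have step2 : ∀ (k n0 b0 : ℕ), ∃ c : ℕ × ℕ, n0 < c.1 ∧ b0 < c.2 ∧
      ε/2 ≤ mass y (B (k+1) ∩ Set.Ico b0 c.2) c.1 :=
    fun k n0 b0 => exists_next hy hsing hε (bad_lt (hBbad (k+1))) n0 b0
  let G : ℕ → ℕ × ℕ := fun k => Nat.rec (0, 0) (fun k p => (step2 k p.1 p.2).choose) k
  set nn : ℕ → ℕ := fun k => (G k).1 with hnn
  set bb : ℕ → ℕ := fun k => (G k).2 with hbb
  have hG : ∀ k, nn k < nn (k+1) ∧ bb k < bb (k+1) ∧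
      ε/2 ≤ mass y (B (k+1) ∩ Set.Ico (bb k) (bb (k+1))) (nn (k+1)) := by
    intro k
    exact (step2 k (G k).1 (G k).2).choose_spec
  set A : Set ℕ := ⋃ k, (B (k+1) ∩ Set.Ico (bb k) (bb (k+1))) with hA
  have hsubA : ∀ k, B (k+1) ∩ Set.Ico (bb k) (bb (k+1)) ⊆ A := by
    intro k
    rw [hA]
    exact Set.subset_iUnion (fun k => B (k+1) ∩ Set.Ico (bb k) (bb (k+1))) k
  -- dsub y A is large
  have hdyA : ε/2 ≤ dsub y A := by
    have hmono : StrictMono nn := strictMono_nat_of_lt_succ (fun k => (hG k).1)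
    have ht : Tendsto (fun k => nn (k+1)) atTop atTop :=
      (hmono.tendsto_atTop).comp (tendsto_add_atTop_nat 1)
    have hfr : ∃ᶠ n in atTop, ε/2 ≤ mass y A n :=
      ht.frequently (Frequently.of_forall (fun k =>
        le_trans (hG k).2.2 (mass_mono y (hsubA k) _)))
    exact le_limsup_of_frequently_le hfr (mass_bdd hy A)
  have hbbmono : Monotone bb := monotone_nat_of_le_succ (fun k => (hG k).2.1.le)
  -- covering estimate
  have hAsub : ∀ K, A ⊆ ↑(Finset.range (bb K)) ∪ B K := by
    intro K j hj
    obtain ⟨k, hk⟩ := Set.mem_iUnion.1 hj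
    obtain ⟨hjB, hjlo, hjhi⟩ := hk
    by_cases h : k < K
    · left
      simp only [Finset.coe_range, Set.mem_Iio]
      exact lt_of_lt_of_le hjhi (hbbmono h)
    · right
      exact hBanti (by omega : K ≤ k + 1) hjB
  -- dsub x A = 0
  have key : ∀ K : ℕ, dsub x A ≤ (1/2)^(K+1) := by
    intro K
    refine le_of_forall_pos_le_add ?_
    intro δ hδ
    have ev1 : ∀ᶠ n in atTop, mass x ↑(Finset.range (bb (K+1))) n < δ/2 :=
      (tendsto_mass_range_zero hx (fun j => dsub_singleton_zero hx hnx j)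
        (bb (K+1))).eventually (gt_mem_nhds (by linarith))
    have hlt : limsup (mass x (B (K+1))) atTop < (1/2)^(K+1) + δ/2 := by
      rw [← dsub_eq]
      linarith [(hstep K).2]
    have ev2 : ∀ᶠ n in atTop, mass x (B (K+1)) n < (1/2)^(K+1) + δ/2 :=
      eventually_lt_of_limsup_lt hlt (mass_bdd hx (B (K+1)))
    have ev : ∀ᶠ n in atTop, mass x A n ≤ (1/2)^(K+1) + δ := by
      filter_upwards [ev1, ev2] with n h1 h2
      calc mass x A n ≤ mass x (↑(Finset.range (bb (K+1))) ∪ B (K+1)) n :=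
            mass_mono x (hAsub (K+1)) n
        _ ≤ mass x ↑(Finset.range (bb (K+1))) n + mass x (B (K+1)) n :=
            mass_union_le x _ _ n
        _ ≤ (1/2)^(K+1) + δ := by linarith
    rw [dsub_eq]
    exact limsup_le_of_le (mass_cobdd x A) ev
  have hdxA : dsub x A = 0 := by
    have ht : Tendsto (fun K : ℕ => ((1:ℝ)/2)^(K+1)) atTop (nhds 0) := by
      have := tendsto_pow_atTop_nhds_zero_of_lt_one
        (by norm_num : (0:ℝ) ≤ 1/2) (by norm_num : (1:ℝ)/2 < 1)
      exact this.comp (tendsto_add_atTop_nat 1)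
    have h0 : dsub x A ≤ 0 := ge_of_tendsto ht (Eventually.of_forall key)
    exact le_antisymm h0 (dsub_nonneg hx A)
  have := hac A hdxA
  rw [this] at hdyA
  linarith
end

section
/- Let T : ℓ¹ → ℓ¹ be a continuous linear operator, let z_n = T(e_n) where (e_n) is the standard unit vector basis of ℓ¹, and let x = (x_n) be a bounded sequence in ℓ¹ that converges to zero pointwise on ℕ (i.e., x_n(j) → 0 as n → ∞ for each j). Let y_n = T(x_n), and let A ⊆ ℕ. If ‖1_A · z_n‖_∞ → 0 as n → ∞, then ‖1_A · y_n‖_∞ → 0 as n → ∞. -/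
open Filter Set
open scoped ENNReal

/-- The sup-norm of `u` restricted to the set `A`: `‖1_A · u‖_∞`. -/
noncomputable def supNormOn (A : Set ℕ) (u : lp (fun _ : ℕ => ℝ) 1) : ℝ :=
  ⨆ k : ℕ, A.indicator (fun k => |u k|) k

/-! ### Auxiliary lemmas -/

/-- Evaluation at a coordinate as a continuous linear functional on `ℓ¹`. -/
noncomputable def evalCLM (k : ℕ) : lp (fun _ : ℕ => ℝ) 1 →L[ℝ] ℝ :=
  LinearMap.mkContinuous
    { toFun := fun u => u k
      map_add' := fun u v => by simp [lp.coeFn_add]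
      map_smul' := fun c u => by simp [lp.coeFn_smul] }
    1 (fun u => by
      show ‖u k‖ ≤ 1 * ‖u‖
      simpa [Real.norm_eq_abs] using lp.norm_apply_le_norm one_ne_zero u k)

lemma abs_apply_le_norm (u : lp (fun _ : ℕ => ℝ) 1) (k : ℕ) : |u k| ≤ ‖u‖ := by
  simpa [Real.norm_eq_abs] using lp.norm_apply_le_norm one_ne_zero u k

lemma hasSum_abs_norm (u : lp (fun _ : ℕ => ℝ) 1) : HasSum (fun j => |u j|) ‖u‖ := by
  have h := lp.hasSum_norm (p := 1) (by norm_num) u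
  simpa [Real.norm_eq_abs] using h

lemma bddAbove_ind (A : Set ℕ) (u : lp (fun _ : ℕ => ℝ) 1) :
    BddAbove (Set.range fun k => A.indicator (fun k => |u k|) k) := by
  refine ⟨‖u‖, ?_⟩
  rintro _ ⟨k, rfl⟩
  by_cases h : k ∈ A
  · simpa [Set.indicator_of_mem h] using abs_apply_le_norm u k
  · simp [Set.indicator_of_notMem h, norm_nonneg]

lemma supNormOn_nonneg (A : Set ℕ) (u : lp (fun _ : ℕ => ℝ) 1) : 0 ≤ supNormOn A u :=
  Real.iSup_nonneg fun _ => Set.indicator_nonneg (fun _ _ => abs_nonneg _) _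

lemma le_supNormOn {A : Set ℕ} (u : lp (fun _ : ℕ => ℝ) 1) {k : ℕ} (hk : k ∈ A) :
    |u k| ≤ supNormOn A u := by
  have := le_ciSup (bddAbove_ind A u) k
  rw [supNormOn]
  simpa [Set.indicator_of_mem hk] using this

lemma supNormOn_le {A : Set ℕ} {u : lp (fun _ : ℕ => ℝ) 1} {b : ℝ} (hb : 0 ≤ b)
    (h : ∀ k ∈ A, |u k| ≤ b) : supNormOn A u ≤ b := by
  refine ciSup_le fun k => ?_
  by_cases hk : k ∈ A
  · simpa [Set.indicator_of_mem hk] using h k hk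
  · simpa [Set.indicator_of_notMem hk] using hb

/-- Coordinatewise expansion of `T u` in terms of the images of the basis vectors. -/
lemma hasSum_coord (T : lp (fun _ : ℕ => ℝ) 1 →L[ℝ] lp (fun _ : ℕ => ℝ) 1)
    (u : lp (fun _ : ℕ => ℝ) 1) (k : ℕ) :
    HasSum (fun j => u j * (T (lp.single 1 j 1)) k) ((T u) k) := by
  haveI : Fact ((1 : ℝ≥0∞) ≤ 1) := ⟨le_rfl⟩
  have h1 : HasSum (fun j : ℕ => lp.single 1 j (u j)) u :=
    lp.hasSum_single (by norm_num) u
  have h2 := ((h1.mapL T).mapL (evalCLM k))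
  convert h2 using 2 with j
  have hs : (lp.single 1 j (u j) : lp (fun _ : ℕ => ℝ) 1)
      = u j • (lp.single 1 j 1 : lp (fun _ : ℕ => ℝ) 1) := by
    have h := lp.single_smul (E := fun _ : ℕ => ℝ) 1 j (u j) (1 : ℝ)
    rw [← h, smul_eq_mul, mul_one]
  rw [hs, map_smul, map_smul]
  simp [evalCLM, LinearMap.coe_mk, AddHom.coe_mk]
  exact Or.inl rfl
  rfl

set_option maxHeartbeats 1000000 in
theorem stmt_13 (T : lp (fun _ : ℕ => ℝ) 1 →L[ℝ] lp (fun _ : ℕ => ℝ) 1)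
    (x : ℕ → lp (fun _ : ℕ => ℝ) 1) (hx : IsBddSeq x)
    (hp : ∀ j : ℕ, Filter.Tendsto (fun n => x n j) Filter.atTop (nhds 0))
    (A : Set ℕ)
    (hz : Filter.Tendsto (fun n => supNormOn A (T (lp.single 1 n 1)))
      Filter.atTop (nhds 0)) :
    Filter.Tendsto (fun n => supNormOn A (T (x n))) Filter.atTop (nhds 0) := by
  classical
  obtain ⟨C, hC⟩ := hx
  have hC0 : 0 ≤ C := le_trans (norm_nonneg _) (hC 0)
  set z : ℕ → lp (fun _ : ℕ => ℝ) 1 := fun j => T (lp.single 1 j 1) with hzdef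
  rw [NormedAddCommGroup.tendsto_nhds_zero]
  intro ε hε
  set δ : ℝ := ε / (4 * (C + 1)) with hδdef
  have hδ : 0 < δ := by positivity
  -- tail control
  obtain ⟨N, hN⟩ := Metric.tendsto_atTop.mp hz δ hδ
  have hNz : ∀ j, N ≤ j → supNormOn A (z j) < δ := by
    intro j hj
    have h := hN j hj
    rw [Real.dist_eq, sub_zero] at h
    exact (le_abs_self _).trans_lt h
  -- finite part control
  have hfin : Tendsto (fun n => ∑ j ∈ Finset.range N, |x n j| * ‖z j‖) atTop (nhds 0) := by
    have h : Tendsto (fun n => ∑ j ∈ Finset.range N, |x n j| * ‖z j‖) atTop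
        (nhds (∑ j ∈ Finset.range N, |(0:ℝ)| * ‖z j‖)) :=
      tendsto_finset_sum _ fun j _ => ((hp j).abs.mul_const ‖z j‖)
    simpa using h
  obtain ⟨M, hM⟩ := Metric.tendsto_atTop.mp hfin δ hδ
  rw [Filter.eventually_atTop]
  refine ⟨M, fun n hn => ?_⟩
  have hfin' : ∑ j ∈ Finset.range N, |x n j| * ‖z j‖ < δ := by
    have h := hM n hn
    rw [Real.dist_eq, sub_zero] at h
    exact (le_abs_self _).trans_lt h
  -- the main bound for each coordinate k ∈ A
  have hb : supNormOn A (T (x n)) ≤ δ + δ * C := by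
    refine supNormOn_le (by positivity) fun k hk => ?_
    have hsum := hasSum_coord T (x n) k
    have hsummable := hsum.summable
    set K : Set ℕ := ((Finset.range N : Finset ℕ) : Set ℕ)ᶜ with hK
    have e1 : (T (x n)) k = ∑ j ∈ Finset.range N, x n j * z j k
        + ∑' (j : K), x n (j : ℕ) * z (j : ℕ) k := by
      rw [← hsum.tsum_eq, ← Summable.sum_add_tsum_compl (s := Finset.range N) hsummable]
    -- bound the tail
    have habs : Summable fun j => |x n j| := (hasSum_abs_norm (x n)).summable
    have htail : |∑' (j : K), x n (j : ℕ) * z (j : ℕ) k|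
        ≤ δ * C := by
      have hs1 : Summable fun j : K =>
          |x n (j : ℕ) * z (j : ℕ) k| := (hsummable.subtype K).abs
      have hs2 : Summable fun j : K =>
          |x n (j : ℕ)| * δ := (habs.subtype K).mul_right δ
      have hle : ∀ j : K,
          |x n (j : ℕ) * z (j : ℕ) k| ≤ |x n (j : ℕ)| * δ := by
        rintro ⟨j, hj⟩
        have hjN : N ≤ j := by
          simp only [hK, Set.mem_compl_iff, Finset.coe_range, Set.mem_Iio, not_lt] at hj
          exact hj
        have h1 : |z j k| ≤ supNormOn A (z j) := le_supNormOn (z j) hk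
        have h2 : |z j k| ≤ δ := h1.trans (hNz j hjN).le
        calc |x n j * z j k| = |x n j| * |z j k| := abs_mul _ _
          _ ≤ |x n j| * δ := by
              exact mul_le_mul_of_nonneg_left h2 (abs_nonneg _)
      have h3 : |∑' (j : K), x n (j : ℕ) * z (j : ℕ) k|
          ≤ ∑' (j : K), |x n (j : ℕ) * z (j : ℕ) k| := by
        have := norm_tsum_le_tsum_norm (f := fun j : K =>
            x n (j : ℕ) * z (j : ℕ) k)
          (by simpa only [Real.norm_eq_abs] using hs1)
        simpa only [Real.norm_eq_abs] using this
      have h4 : (∑' (j : K), |x n (j : ℕ) * z (j : ℕ) k|)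
          ≤ ∑' (j : K), |x n (j : ℕ)| * δ :=
        Summable.tsum_le_tsum hle hs1 hs2
      have h5 : (∑' (j : K), |x n (j : ℕ)| * δ)
          = (∑' (j : K), |x n (j : ℕ)|) * δ :=
        tsum_mul_right
      have h6 : (∑' (j : K), |x n (j : ℕ)|) ≤ C := by
        have hsplit2 := Summable.sum_add_tsum_compl (s := Finset.range N) habs
        have h7 : (∑' j, |x n j|) = ‖x n‖ := (hasSum_abs_norm (x n)).tsum_eq
        have h8 : 0 ≤ ∑ j ∈ Finset.range N, |x n j| :=
          Finset.sum_nonneg fun _ _ => abs_nonneg _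
        nlinarith [hC n]
      calc |∑' (j : K), x n (j : ℕ) * z (j : ℕ) k|
          ≤ (∑' (j : K), |x n (j : ℕ)|) * δ :=
            h3.trans (h4.trans_eq h5)
        _ ≤ δ * C := by nlinarith
    -- bound the head
    have hhead : |∑ j ∈ Finset.range N, x n j * z j k| ≤ δ := by
      calc |∑ j ∈ Finset.range N, x n j * z j k|
          ≤ ∑ j ∈ Finset.range N, |x n j * z j k| := Finset.abs_sum_le_sum_abs _ _
        _ ≤ ∑ j ∈ Finset.range N, |x n j| * ‖z j‖ := by
            refine Finset.sum_le_sum fun j _ => ?_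
            rw [abs_mul]
            exact mul_le_mul_of_nonneg_left (abs_apply_le_norm (z j) k) (abs_nonneg _)
        _ ≤ δ := hfin'.le
    calc |(T (x n)) k| ≤ |∑ j ∈ Finset.range N, x n j * z j k|
          + |∑' (j : K), x n (j : ℕ) * z (j : ℕ) k| := by
            rw [e1]; exact abs_add_le _ _
      _ ≤ δ + δ * C := add_le_add hhead htail
  have hfinal : δ + δ * C < ε := by
    have hC1 : (0:ℝ) < C + 1 := by linarith
    have h1 : δ + δ * C = δ * (C + 1) := by ring
    have h2 : δ * (C + 1) = ε / 4 := by
      rw [hδdef, div_mul_eq_mul_div, mul_div_mul_right _ _ (ne_of_gt hC1)]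
    linarith
  rw [Real.norm_eq_abs, abs_of_nonneg (supNormOn_nonneg A (T (x n)))]
  exact hb.trans_lt hfinal
end
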